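/- Let f be a rational Herglotz–Nevanlinna function (or f = ∞) with μ < π̊(f) and τ > f(μ) in case f ≠ ∞, and ρ ∈ ℝ. Then f̂ := Θ(μ,τ,ρ,f) is a rational Herglotz–Nevanlinna function, ind f̂ = ind f + 1, and its associated polynomials are given by f̂↑(λ) = −ρ f↑(λ) + (λ − μ + τρ) f↓(λ) and f̂↓(λ) = −f↑(λ) + τ f↓(λ). -/

import Mathlib

open MeasureTheory Set

/-- A rational Herglotz–Nevanlinna function
`f(λ) = h₀λ + h + ∑_{k=1}^{d} δ_k/(h_k − λ)` with `h₀ ≥ 0`, `δ_k > 0` and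
strictly increasing poles `h₁ < ⋯ < h_d`. -/
structure RHN : Type where
  d : ℕ
  h0 : ℝ
  h : ℝ
  delta : Fin d → ℝ
  pole : Fin d → ℝ
  h0_nonneg : 0 ≤ h0
  delta_pos : ∀ k, 0 < delta k
  pole_strictMono : StrictMono pole

namespace RHN

/-- The value `f(x)`. -/
noncomputable def eval (f : RHN) (x : ℝ) : ℝ :=
  f.h0 * x + f.h + ∑ k, f.delta k / (f.pole k - x)

/-- The normalizing constant `h₀′`. -/
noncomputable def h0' (f : RHN) : ℝ := if 0 < f.h0 then 1 / f.h0 else 1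

/-- The polynomial `f↓(x) = h₀′ ∏ (h_k − x)` (as a function). -/
noncomputable def fdown (f : RHN) (x : ℝ) : ℝ := f.h0' * ∏ k, (f.pole k - x)

/-- The polynomial `f↑ = f ⬝ f↓` (as a function). -/
noncomputable def fup (f : RHN) (x : ℝ) : ℝ :=
  f.h0' * ((f.h0 * x + f.h) * ∏ k, (f.pole k - x)
    + ∑ k, f.delta k * ∏ j ∈ Finset.univ.erase k, (f.pole j - x))

/-- The index `ind f = deg f↑ + deg f↓`, i.e. `2d+1` if `h₀ > 0` and `2d` if `h₀ = 0`. -/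
noncomputable def index (f : RHN) : ℤ := 2 * f.d + (if 0 < f.h0 then 1 else 0)

/-- The smallest pole `π̊(f)` (equal to `+∞` when `f` has no poles). -/
noncomputable def mpole (f : RHN) : EReal :=
  if hd : 0 < f.d then ((f.pole ⟨0, hd⟩ : ℝ) : EReal) else (⊤ : EReal)

/-- `f` is a constant function (class `𝓡₀`). -/
def IsConst (f : RHN) : Prop := f.d = 0 ∧ f.h0 = 0

/-- The function `f + a`. -/
def addConst (f : RHN) (a : ℝ) : RHN := { f with h := f.h + a }

/-- `Π_f(x)`: the number of poles of `f` not exceeding `x`. -/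
noncomputable def poleCount (f : RHN) (x : ℝ) : ℕ := Nat.card {k : Fin f.d // f.pole k ≤ x}

end RHN

/-- A boundary coefficient: a rational Herglotz–Nevanlinna function, or `none` = `∞`
(the Dirichlet case). -/
abbrev BC := Option RHN

namespace BC

noncomputable def fup : BC → ℝ → ℝ
  | none => fun _ => -1
  | some f => f.fup

noncomputable def fdown : BC → ℝ → ℝ
  | none => fun _ => 0
  | some f => f.fdown

noncomputable def index : BC → ℤ
  | none => -1
  | some f => f.index

noncomputable def mpole : BC → EReal
  | none => (⊤ : EReal)
  | some f => f.mpole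

noncomputable def poleCount : BC → ℝ → ℕ
  | none => fun _ => 0
  | some f => f.poleCount

end BC

/-- `f↑′(x)f↓(x) − f↑(x)f↓′(x)`, the expression appearing in the norming constants
(it equals `f′(x)f↓²(x)` away from the poles). -/
noncomputable def wronskLike (f : BC) (x : ℝ) : ℝ :=
  deriv (BC.fup f) x * BC.fdown f x - BC.fup f x * deriv (BC.fdown f) x

/-- `s` is real-valued, belongs to `L²(0,π)` and has zero mean. -/
def AdmissibleS (s : ℝ → ℝ) : Prop :=
  MemLp s 2 (volume.restrict (Set.Icc 0 Real.pi)) ∧ (∫ x in (0:ℝ)..Real.pi, s x) = 0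

/-- `(y, w)` is a solution of `−(y^{[1]})′ − s y^{[1]} − s² y = λ y` on `[0,π]`, where
`w = y^{[1]} = y′ − s y` is the quasi-derivative; both `y` and `w` are absolutely
continuous, being integrals of integrable functions. -/
def IsSolution (s : ℝ → ℝ) (lam : ℝ) (y w : ℝ → ℝ) : Prop :=
  IntegrableOn (fun t => w t + s t * y t) (Set.Icc 0 Real.pi) ∧
  IntegrableOn (fun t => -(s t) * w t - (s t) ^ 2 * y t - lam * y t) (Set.Icc 0 Real.pi) ∧
  (∀ x ∈ Set.Icc 0 Real.pi, y x = y 0 + ∫ t in (0:ℝ)..x, (w t + s t * y t)) ∧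
  (∀ x ∈ Set.Icc 0 Real.pi,
    w x = w 0 + ∫ t in (0:ℝ)..x, (-(s t) * w t - (s t) ^ 2 * y t - lam * y t))

/-- `lam` is an eigenvalue of the boundary value problem `𝒫(s,f,F)`. -/
def IsEigenvalue (s : ℝ → ℝ) (f F : BC) (lam : ℝ) : Prop :=
  ∃ y w : ℝ → ℝ, IsSolution s lam y w ∧ (y 0 ≠ 0 ∨ w 0 ≠ 0) ∧
    BC.fdown f lam * w 0 + BC.fup f lam * y 0 = 0 ∧
    BC.fup F lam * y Real.pi - BC.fdown F lam * w Real.pi = 0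

/-- `lam 0 < lam 1 < ⋯` is the increasing enumeration of all eigenvalues of `𝒫(s,f,F)`. -/
def IsSpectrum (s : ℝ → ℝ) (f F : BC) (lam : ℕ → ℝ) : Prop :=
  StrictMono lam ∧ ∀ x : ℝ, IsEigenvalue s f F x ↔ ∃ n, lam n = x

/-- `gam` is the norming constant of `𝒫(s,f,F)` corresponding to the eigenvalue `lam`:
`γ = ∫₀^π φ² + (f↑′f↓ − f↑f↓′)(λ) + (1/β²)(F↑′F↓ − F↑F↓′)(λ)` where `φ` is the solution
with `φ(0) = f↓(λ)`, `φ^{[1]}(0) = −f↑(λ)`, `ψ` the solution with `ψ(π) = F↓(λ)`,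
`ψ^{[1]}(π) = F↑(λ)`, and `ψ = βφ`. -/
def IsNormingConstant (s : ℝ → ℝ) (f F : BC) (lam gam : ℝ) : Prop :=
  ∃ y w Y W : ℝ → ℝ, ∃ b : ℝ,
    IsSolution s lam y w ∧ y 0 = BC.fdown f lam ∧ w 0 = -(BC.fup f lam) ∧
    IsSolution s lam Y W ∧ Y Real.pi = BC.fdown F lam ∧ W Real.pi = BC.fup F lam ∧
    b ≠ 0 ∧ (∀ x ∈ Set.Icc 0 Real.pi, Y x = b * y x) ∧
    gam = (∫ x in (0:ℝ)..Real.pi, (y x) ^ 2) + wronskLike f lam + (1 / b ^ 2) * wronskLike F lam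

/-- `{lam n, gam n}` is the spectral data of `𝒫(s,f,F)`. -/
def IsSpectralData (s : ℝ → ℝ) (f F : BC) (lam gam : ℕ → ℝ) : Prop :=
  IsSpectrum s f F lam ∧ ∀ n, IsNormingConstant s f F (lam n) (gam n)

/-- `g = Θ(μ,τ,ρ,f)`, i.e. `g(λ) = (μ − λ)/(f(λ) − τ) + ρ`, with the conventions
`Θ(μ,τ,ρ,f) = ∞` if `f ≡ τ` and `Θ(μ,τ,ρ,∞) = ρ`. -/
def IsTheta (mu tau rho : ℝ) : BC → BC → Prop
  | none, some g => g.d = 0 ∧ g.h0 = 0 ∧ g.h = rho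
  | none, none => False
  | some f, none => ∀ x, f.eval x = tau
  | some f, some g => (¬ ∀ x, f.eval x = tau) ∧
      ∀ x, f.fdown x ≠ 0 → f.eval x ≠ tau → g.fdown x ≠ 0 →
        g.eval x = (mu - x) / (f.eval x - tau) + rho

/-- The common part of the transformations `T̂` and `T̃`: given the factorizing solution
`(v, w)` (with `w = v^{[1]}`) of the original equation at the value `Λ`, the transformed
potential is `st = s − 2v′/v + (2/π)ln(v(π)/v(0)) = −s − 2w/v + (2/π)ln(v(π)/v(0))`
(a.e. on `[0,π]`) and the transformed boundary coefficients are the indicated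
`Θ`-transforms of `f` and `F`. -/
def TransfCore (s : ℝ → ℝ) (f F : BC) (Lam : ℝ) (v w : ℝ → ℝ)
    (st : ℝ → ℝ) (ft Ft : BC) : Prop :=
  (∀ x ∈ Set.Icc 0 Real.pi, v x ≠ 0) ∧
  (∀ᵐ x ∂(volume : Measure ℝ), x ∈ Set.Icc 0 Real.pi →
    st x = -(s x) - 2 * w x / v x + (2 / Real.pi) * Real.log (v Real.pi / v 0)) ∧
  IsTheta Lam (-(w 0) / v 0) (-(w 0) / v 0 + (2 / Real.pi) * Real.log (v Real.pi / v 0)) f ft ∧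
  IsTheta Lam (w Real.pi / v Real.pi)
    (w Real.pi / v Real.pi - (2 / Real.pi) * Real.log (v Real.pi / v 0)) F Ft

/-- The shift `Λ` used in the transformation `T̂`: `Λ = λ₀` if `f, F ≠ ∞` and
`Λ = λ₀ − 2` otherwise. -/
def hatLam (f F : BC) (lam0 : ℝ) : ℝ := if f.isSome && F.isSome then lam0 else lam0 - 2

/-- `(st, ft, Ft) = T̂(s, f, F)`, where `lam0` is the smallest eigenvalue of `𝒫(s,f,F)`;
the factorizing solution is `v = φ(·,Λ)` if `f ≠ ∞` and `v = ψ(·,Λ)` if `f = ∞`. -/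
def IsHatT (s : ℝ → ℝ) (f F : BC) (lam0 : ℝ) (st : ℝ → ℝ) (ft Ft : BC) : Prop :=
  ∃ v w : ℝ → ℝ,
    IsSolution s (hatLam f F lam0) v w ∧
    (if f.isSome then
        v 0 = BC.fdown f (hatLam f F lam0) ∧ w 0 = -(BC.fup f (hatLam f F lam0))
      else
        v Real.pi = BC.fdown F (hatLam f F lam0) ∧ w Real.pi = BC.fup F (hatLam f F lam0)) ∧
    TransfCore s f F (hatLam f F lam0) v w st ft Ft

/-- `(st, ft, Ft) = T̃(μ, ν, s, f, F)`, where `lam0 = λ̊(s,f,F)` and `gam0 = γ̊(s,f,F)`;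
the three disjuncts correspond to the three pieces `S̃₁`, `S̃₂`, `S̃₃` of the domain `S̃`. -/
def IsTildeT (mu nu : ℝ) (s : ℝ → ℝ) (f F : BC) (lam0 gam0 : ℝ)
    (st : ℝ → ℝ) (ft Ft : BC) : Prop :=
  (mu < lam0 ∧ 0 < nu ∧
    ∃ Cy Cw Sy Sw : ℝ → ℝ, ∃ kap rho : ℝ,
      IsSolution s mu Cy Cw ∧ Cy 0 = 1 ∧ Cw 0 = 0 ∧
      IsSolution s mu Sy Sw ∧ Sy 0 = 0 ∧ Sw 0 = 1 ∧
      BC.fup F mu * Sy Real.pi - BC.fdown F mu * Sw Real.pi ≠ 0 ∧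
      kap = (BC.fup F mu * Cy Real.pi - BC.fdown F mu * Cw Real.pi) /
            (BC.fup F mu * Sy Real.pi - BC.fdown F mu * Sw Real.pi) ∧
      nu + BC.fdown f mu * (kap * BC.fdown f mu - BC.fup f mu) ≠ 0 ∧
      rho = (nu * kap + BC.fup f mu * (kap * BC.fdown f mu - BC.fup f mu)) /
            (nu + BC.fdown f mu * (kap * BC.fdown f mu - BC.fup f mu)) ∧
      TransfCore s f F mu (fun x => Cy x - rho * Sy x) (fun x => Cw x - rho * Sw x) st ft Ft) ∨
  ((∃ f' : RHN, f = some f' ∧ f'.IsConst) ∧ mu = lam0 ∧ nu = gam0 / 2 ∧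
    ∃ v w : ℝ → ℝ, IsSolution s (mu - 2) v w ∧
      v 0 = BC.fdown f (mu - 2) ∧ w 0 = -(BC.fup f (mu - 2)) ∧
      TransfCore s f F (mu - 2) v w st ft Ft) ∨
  ((∃ F' : RHN, F = some F' ∧ F'.IsConst) ∧ mu = lam0 ∧ nu = 2 * gam0 ∧
    ∃ v w : ℝ → ℝ, IsSolution s (mu - 2) v w ∧
      v Real.pi = BC.fdown F (mu - 2) ∧ w Real.pi = BC.fup F (mu - 2) ∧
      TransfCore s f F (mu - 2) v w st ft Ft)


section ThetaAux

open Polynomial Finset Filter Topology Set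

private lemma aux_flip {ι : Type*} (s : Finset ι) (a : ι → ℝ) (x : ℝ) :
    ∏ i ∈ s, (a i - x) = (-1 : ℝ)^s.card * ∏ i ∈ s, (x - a i) := by
  rw [← Finset.prod_const, ← Finset.prod_mul_distrib]
  exact Finset.prod_congr rfl (fun i _ => by ring)

private lemma aux_monic {ι : Type*} (s : Finset ι) (a : ι → ℝ) :
    (∏ i ∈ s, (X - C (a i)) : ℝ[X]).Monic :=
  monic_prod_of_monic _ _ (fun i _ => monic_X_sub_C _)

private lemma aux_deg {ι : Type*} (s : Finset ι) (a : ι → ℝ) :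
    (∏ i ∈ s, (X - C (a i)) : ℝ[X]).natDegree = s.card := by
  rw [Polynomial.natDegree_prod_of_monic _ _ (fun i _ => monic_X_sub_C _)]
  simp

private lemma aux_evalprod {ι : Type*} (s : Finset ι) (a : ι → ℝ) (x : ℝ) :
    (∏ i ∈ s, (X - C (a i)) : ℝ[X]).eval x = ∏ i ∈ s, (x - a i) := by
  simp [Polynomial.eval_prod]

private lemma aux_coeff_top {ι : Type*} (s : Finset ι) (a : ι → ℝ) :
    (∏ i ∈ s, (X - C (a i)) : ℝ[X]).coeff s.card = 1 := by
  have h1 := aux_monic s a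
  have h2 := aux_deg s a
  rw [← h2]
  exact h1.coeff_natDegree

private lemma aux_coeff_gt {ι : Type*} (s : Finset ι) (a : ι → ℝ) {m : ℕ} (hm : s.card < m) :
    (∏ i ∈ s, (X - C (a i)) : ℝ[X]).coeff m = 0 :=
  Polynomial.coeff_eq_zero_of_natDegree_lt (by rw [aux_deg]; exact hm)

private lemma aux_poly_zero (E : ℝ[X]) (n : ℕ) (z : Fin n → ℝ) (hz : Function.Injective z)
    (hd : E.natDegree ≤ n) (hc : E.coeff n = 0) (hr : ∀ k, E.eval (z k) = 0) : E = 0 := by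
  by_contra h
  have hlt : E.natDegree < n := by
    rcases lt_or_eq_of_le hd with h' | h'
    · exact h'
    · exact absurd (Polynomial.leadingCoeff_eq_zero.mp (by rw [Polynomial.leadingCoeff, h', hc])) h
  exact h (Polynomial.eq_zero_of_natDegree_lt_card_of_eval_eq_zero E hz hr (by simpa using hlt))

private lemma aux_card_filter {m : ℕ} (c : ℕ) (hc : c ≤ m) :
    ((Finset.univ : Finset (Fin m)).filter fun j : Fin m => (j:ℕ) < c).card = c := by
  classical
  have heq : ((Finset.univ : Finset (Fin m)).filter fun j : Fin m => (j:ℕ) < c) =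
      (Finset.range c).attachFin (fun x hx => lt_of_lt_of_le (Finset.mem_range.mp hx) hc) := by
    ext j
    simp [Finset.mem_attachFin]
  rw [heq, Finset.card_attachFin, Finset.card_range]

private lemma aux_signed_prod_pos {ι : Type*} (w : ι → ℝ) (t : ℝ) (s : Finset ι) (cc : ℕ)
    (hcard : (s.filter fun j => w j < t).card = cc) (h : ∀ j ∈ s, w j ≠ t) :
    0 < (-1 : ℝ)^cc * ∏ j ∈ s, (w j - t) := by
  rw [← Finset.prod_filter_mul_prod_filter_not s (fun j => w j < t)]
  rw [aux_flip (s.filter fun j => w j < t) w t, hcard]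
  have h1 : 0 < ∏ j ∈ s.filter (fun j => w j < t), (t - w j) :=
    Finset.prod_pos (fun j hj => sub_pos.2 (Finset.mem_filter.mp hj).2)
  have h2 : 0 < ∏ j ∈ s.filter (fun j => ¬ w j < t), (w j - t) := by
    refine Finset.prod_pos (fun j hj => sub_pos.2 ?_)
    have hj' := Finset.mem_filter.mp hj
    exact lt_of_le_of_ne (not_lt.1 hj'.2) (Ne.symm (h j hj'.1))
  have h3 : ((-1 : ℝ))^cc * ((-1 : ℝ))^cc = 1 := by
    rw [← pow_add]
    exact Even.neg_one_pow ⟨cc, rfl⟩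
  calc (0:ℝ) < (∏ j ∈ s.filter (fun j => w j < t), (t - w j))
        * ∏ j ∈ s.filter (fun j => ¬ w j < t), (w j - t) := mul_pos h1 h2
    _ = ((-1:ℝ))^cc * ((-1:ℝ))^cc * ((∏ j ∈ s.filter (fun j => w j < t), (t - w j))
        * ∏ j ∈ s.filter (fun j => ¬ w j < t), (w j - t)) := by rw [h3, one_mul]
    _ = (-1:ℝ)^cc * (((-1:ℝ))^cc * (∏ j ∈ s.filter (fun j => w j < t), (t - w j))
        * ∏ j ∈ s.filter (fun j => ¬ w j < t), (w j - t)) := by ring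

private lemma aux_h0'_pos (f : RHN) : 0 < f.h0' := by
  rw [RHN.h0']
  split
  · next hh => exact div_pos one_pos hh
  · exact one_pos

private lemma aux_fdown_factors (f : RHN) {x : ℝ} (h : f.fdown x ≠ 0) :
    ∀ j, f.pole j - x ≠ 0 := by
  intro j hj
  apply h
  rw [RHN.fdown, Finset.prod_eq_zero (Finset.mem_univ j) hj, mul_zero]

private lemma aux_fup_eq (f : RHN) (x : ℝ) (hx : ∀ j, f.pole j - x ≠ 0) :
    f.fup x = f.eval x * f.fdown x := by
  rw [RHN.fup, RHN.eval, RHN.fdown]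
  have key : (∑ k, f.delta k / (f.pole k - x)) * ∏ j, (f.pole j - x)
      = ∑ k, f.delta k * ∏ j ∈ Finset.univ.erase k, (f.pole j - x) := by
    rw [Finset.sum_mul]
    refine Finset.sum_congr rfl fun k _ => ?_
    rw [← Finset.mul_prod_erase _ _ (Finset.mem_univ k)]
    field_simp [hx k]
  linear_combination (-f.h0') * key

end ThetaAux

section ThetaAnalysis
open Polynomial Finset Filter Topology Set


lemma aux_contAt (f : RHN) (x : ℝ) (hx : ∀ j, f.pole j ≠ x) : ContinuousAt f.eval x := by
  have h1 : ∀ j : Fin f.d, ContinuousAt (fun y => f.delta j / (f.pole j - y)) x := by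
    intro j
    exact continuousAt_const.div (continuousAt_const.sub continuousAt_id) (sub_ne_zero.2 (hx j))
  have h2 : ContinuousAt (fun y => ∑ j, f.delta j / (f.pole j - y)) x :=
    tendsto_finset_sum _ (fun j _ => h1 j)
  exact ((continuousAt_id.const_smul f.h0).add continuousAt_const).add h2

lemma aux_tendsto_rest (f : RHN) (i : Fin f.d) (l : Filter ℝ) (hl : l ≤ nhds (f.pole i)) :
    Tendsto (fun x => f.h0 * x + f.h + ∑ j ∈ univ.erase i, f.delta j / (f.pole j - x)) l
      (nhds (f.h0 * f.pole i + f.h + ∑ j ∈ univ.erase i, f.delta j / (f.pole j - f.pole i))) := by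
  have h1 : ∀ j ∈ univ.erase i, ContinuousAt (fun y => f.delta j / (f.pole j - y)) (f.pole i) := by
    intro j hj
    refine continuousAt_const.div (continuousAt_const.sub continuousAt_id) (sub_ne_zero.2 ?_)
    exact fun hh => (Finset.mem_erase.mp hj).1 (f.pole_strictMono.injective hh)
  have h2 : ContinuousAt (fun x => f.h0 * x + f.h + ∑ j ∈ univ.erase i, f.delta j / (f.pole j - x)) (f.pole i) :=
    ((continuousAt_id.const_smul f.h0).add continuousAt_const).add (tendsto_finset_sum _ h1)
  exact h2.tendsto.mono_left hl

lemma aux_eval_split (f : RHN) (i : Fin f.d) (x : ℝ) :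
    f.eval x = (f.h0 * x + f.h + ∑ j ∈ univ.erase i, f.delta j / (f.pole j - x))
      + f.delta i / (f.pole i - x) := by
  rw [RHN.eval, ← Finset.add_sum_erase _ _ (mem_univ i)]; ring

lemma aux_tendsto_left (f : RHN) (i : Fin f.d) : Tendsto f.eval (nhdsWithin (f.pole i) (Iio (f.pole i))) atTop := by
  have h1 : Tendsto (fun x : ℝ => f.pole i - x) (nhdsWithin (f.pole i) (Iio (f.pole i))) (nhdsWithin 0 (Ioi 0)) := by
    apply tendsto_nhdsWithin_of_tendsto_nhds_of_eventually_within
    · have h0 : Tendsto (fun x : ℝ => f.pole i - x) (nhds (f.pole i)) (nhds (f.pole i - f.pole i)) :=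
        (continuous_const.sub continuous_id).tendsto (f.pole i)
      simpa using h0.mono_left nhdsWithin_le_nhds
    · exact eventually_nhdsWithin_of_forall (fun x (hx : x < f.pole i) => by simp [sub_pos.2 hx])
  have h2 : Tendsto (fun x => f.delta i / (f.pole i - x)) (nhdsWithin (f.pole i) (Iio (f.pole i))) atTop := by
    simp only [div_eq_mul_inv]
    exact (tendsto_inv_nhdsGT_zero.comp h1).const_mul_atTop (f.delta_pos i)
  exact ((aux_tendsto_rest f i _ nhdsWithin_le_nhds).add_atTop h2).congr (fun x => (aux_eval_split f i x).symm)

lemma aux_tendsto_right (f : RHN) (i : Fin f.d) : Tendsto f.eval (nhdsWithin (f.pole i) (Ioi (f.pole i))) atBot := by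
  have h1 : Tendsto (fun x : ℝ => x - f.pole i) (nhdsWithin (f.pole i) (Ioi (f.pole i))) (nhdsWithin 0 (Ioi 0)) := by
    apply tendsto_nhdsWithin_of_tendsto_nhds_of_eventually_within
    · have h0 : Tendsto (fun x : ℝ => x - f.pole i) (nhds (f.pole i)) (nhds (f.pole i - f.pole i)) :=
        (continuous_id.sub continuous_const).tendsto (f.pole i)
      simpa using h0.mono_left nhdsWithin_le_nhds
    · exact eventually_nhdsWithin_of_forall (fun x (hx : f.pole i < x) => by simp [sub_pos.2 hx])
  have h2 : Tendsto (fun x => f.delta i / (f.pole i - x)) (nhdsWithin (f.pole i) (Ioi (f.pole i))) atBot := by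
    have h3 : Tendsto (fun x => f.delta i / (x - f.pole i)) (nhdsWithin (f.pole i) (Ioi (f.pole i))) atTop := by
      simp only [div_eq_mul_inv]
      exact (tendsto_inv_nhdsGT_zero.comp h1).const_mul_atTop (f.delta_pos i)
    refine (tendsto_neg_atTop_atBot.comp h3).congr (fun x => ?_)
    simp only [Function.comp_apply]
    rw [show f.pole i - x = -(x - f.pole i) from by ring, div_neg]
  exact ((aux_tendsto_rest f i _ nhdsWithin_le_nhds).add_atBot h2).congr (fun x => (aux_eval_split f i x).symm)

lemma aux_tendsto_top (f : RHN) (hh0 : 0 < f.h0) : Tendsto f.eval atTop atTop := by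
  have h1 : Tendsto (fun x : ℝ => f.h0 * x) atTop atTop := tendsto_id.const_mul_atTop hh0
  have h2 : Tendsto (fun x => f.h + ∑ j, f.delta j / (f.pole j - x)) atTop
      (nhds (f.h + ∑ j : Fin f.d, (0:ℝ))) := by
    refine tendsto_const_nhds.add (tendsto_finset_sum _ (fun j _ => ?_))
    have h4 : Tendsto (fun x : ℝ => x - f.pole j) atTop atTop :=
      tendsto_atTop_add_const_right _ _ tendsto_id
    have h5 : Tendsto (fun x => f.delta j / (x - f.pole j)) atTop (nhds 0) := by
      simpa [div_eq_mul_inv] using h4.inv_tendsto_atTop.const_mul (f.delta j)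
    have h6 := h5.neg
    rw [neg_zero] at h6
    refine h6.congr (fun x => ?_)
    rw [show f.pole j - x = -(x - f.pole j) from by ring, div_neg]
  exact (h1.atTop_add h2).congr (fun x => by simp [RHN.eval]; ring)

lemma aux_exists_root_bounded (f : RHN) (tau a : ℝ) (i : Fin f.d) (ha : f.eval a < tau)
    (hai : a < f.pole i) (hpoles : ∀ j, f.pole j < a ∨ f.pole i ≤ f.pole j) :
    ∃ z, a < z ∧ z < f.pole i ∧ f.eval z = tau := by
  have hev : ∀ᶠ x in nhdsWithin (f.pole i) (Iio (f.pole i)), tau < f.eval x :=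
    (aux_tendsto_left f i).eventually_gt_atTop tau
  have hIoo : Ioo a (f.pole i) ∈ nhdsWithin (f.pole i) (Iio (f.pole i)) :=
    Ioo_mem_nhdsLT_of_mem ⟨hai, le_refl _⟩
  obtain ⟨b, hb1, hb2⟩ := (hev.and (Filter.eventually_of_mem hIoo (fun x hx => hx))).exists
  have hab : a < b := hb2.1
  have hcont : ContinuousOn f.eval (Icc a b) := by
    refine fun x hx => (aux_contAt f x ?_).continuousWithinAt
    intro j hj
    rcases hpoles j with h' | h'
    · exact (ne_of_lt (lt_of_lt_of_le h' hx.1)) hj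
    · exact (ne_of_gt (lt_of_le_of_lt hx.2 (lt_of_lt_of_le hb2.2 h'))) hj
  obtain ⟨z, hz1, hz2⟩ := intermediate_value_Ioo hab.le hcont ⟨ha, hb1⟩
  exact ⟨z, hz1.1, hz1.2.trans hb2.2, hz2⟩

lemma aux_exists_root_unbounded (f : RHN) (tau a : ℝ) (hh0 : 0 < f.h0) (ha : f.eval a < tau)
    (hpoles : ∀ j, f.pole j < a) : ∃ z, a < z ∧ f.eval z = tau := by
  have hev : ∀ᶠ x in atTop, tau < f.eval x := (aux_tendsto_top f hh0).eventually_gt_atTop tau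
  obtain ⟨b, hb1, hb2⟩ := (hev.and (eventually_gt_atTop a)).exists
  have hcont : ContinuousOn f.eval (Icc a b) := by
    refine fun x hx => (aux_contAt f x ?_).continuousWithinAt
    intro j hj
    exact (ne_of_lt (lt_of_lt_of_le (hpoles j) hx.1)) hj
  obtain ⟨z, hz1, hz2⟩ := intermediate_value_Ioo hb2.le hcont ⟨ha, hb1⟩
  exact ⟨z, hz1.1, hz2⟩

lemma aux_exists_left_point (f : RHN) (tau q : ℝ) (i : Fin f.d) (hq : f.pole i < q) :
    ∃ a, f.pole i < a ∧ a < q ∧ f.eval a < tau := by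
  have hev : ∀ᶠ x in nhdsWithin (f.pole i) (Ioi (f.pole i)), f.eval x < tau :=
    (aux_tendsto_right f i).eventually_lt_atBot tau
  have hIoo : Ioo (f.pole i) q ∈ nhdsWithin (f.pole i) (Ioi (f.pole i)) :=
    Ioo_mem_nhdsGT_of_mem ⟨le_refl _, hq⟩
  obtain ⟨b, hb1, hb2⟩ := (hev.and (Filter.eventually_of_mem hIoo (fun x hx => hx))).exists
  exact ⟨b, hb2.1, hb2.2, hb1⟩

lemma aux_exists_roots (f : RHN) (mu tau : ℝ) (hmu : ∀ j, mu < f.pole j) (htau : f.eval mu < tau)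
    {n : ℕ} (hn : n = f.d + (if 0 < f.h0 then 1 else 0)) (k : Fin n) :
    ∃ z : ℝ, mu < z ∧ (∀ hk : (k:ℕ) < f.d, z < f.pole ⟨k, hk⟩) ∧
      (∀ j : Fin f.d, (j:ℕ) < (k:ℕ) → f.pole j < z) ∧ f.eval z = tau := by
  have he : (if 0 < f.h0 then 1 else 0) ≤ 1 := by split <;> omega
  have hkn : (k:ℕ) < n := k.isLt
  have hkn' : (k:ℕ) < f.d + (if 0 < f.h0 then 1 else 0) := lt_of_lt_of_eq hkn hn
  by_cases hk0 : (k:ℕ) = 0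
  · by_cases hkd : (k:ℕ) < f.d
    · obtain ⟨z, hz1, hz2, hz3⟩ := aux_exists_root_bounded f tau mu ⟨k, hkd⟩ htau (hmu _)
        (fun j => Or.inr (f.pole_strictMono.monotone (by simp only [Fin.le_def]; omega)))
      exact ⟨z, hz1, fun hk => hz2, fun j hj => absurd hj (by omega), hz3⟩
    · have hh0 : 0 < f.h0 := by
        by_contra hc
        simp only [if_neg hc] at hn
        omega
      have hd0 : f.d = 0 := by omega
      obtain ⟨z, hz1, hz3⟩ := aux_exists_root_unbounded f tau mu hh0 htau
        (fun j => absurd j.isLt (by omega))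
      exact ⟨z, hz1, fun hk => absurd hk hkd, fun j hj => absurd j.isLt (by omega), hz3⟩
  · have hk1 : (k:ℕ) - 1 < f.d := by omega
    set i' : Fin f.d := ⟨(k:ℕ)-1, hk1⟩ with hi'
    by_cases hkd : (k:ℕ) < f.d
    · have hq : f.pole i' < f.pole ⟨k, hkd⟩ := f.pole_strictMono (by simp only [Fin.lt_def, hi']; omega)
      obtain ⟨a, ha1, ha2, ha3⟩ := aux_exists_left_point f tau _ i' hq
      have hpoles : ∀ j, f.pole j < a ∨ f.pole ⟨(k:ℕ), hkd⟩ ≤ f.pole j := by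
        intro j
        by_cases hj : (j:ℕ) < (k:ℕ)
        · exact Or.inl ((f.pole_strictMono.monotone
            (show j ≤ i' by simp only [Fin.le_def, hi']; omega)).trans_lt ha1)
        · exact Or.inr (f.pole_strictMono.monotone (by simp only [Fin.le_def]; omega))
      obtain ⟨z, hz1, hz2, hz3⟩ := aux_exists_root_bounded f tau a ⟨k, hkd⟩ ha3 ha2 hpoles
      refine ⟨z, (hmu i').trans (ha1.trans hz1), fun hk => hz2, fun j hj => ?_, hz3⟩
      exact (f.pole_strictMono.monotone
        (show j ≤ i' by simp only [Fin.le_def, hi']; omega)).trans_lt (ha1.trans hz1)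
    · have hh0 : 0 < f.h0 := by
        by_contra hc
        simp only [if_neg hc] at hn
        omega
      obtain ⟨a, ha1, ha2, ha3⟩ := aux_exists_left_point f tau (f.pole i' + 1) i' (lt_add_one _)
      obtain ⟨z, hz1, hz3⟩ := aux_exists_root_unbounded f tau a hh0 ha3
        (fun j => (f.pole_strictMono.monotone
          (show j ≤ i' by simp only [Fin.le_def, hi']; omega)).trans_lt ha1)
      exact ⟨z, (hmu i').trans (ha1.trans hz1), fun hk => absurd hk hkd,
        fun j hj => (f.pole_strictMono.monotone
          (show j ≤ i' by simp only [Fin.le_def, hi']; omega)).trans_lt (ha1.trans hz1), hz3⟩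

end ThetaAnalysis

section ThetaConstr

open Polynomial Finset Filter Topology Set

private lemma aux_theta_construction (f : RHN) (mu tau rho : ℝ)
    (hmu : ∀ j, mu < f.pole j) (htau : f.eval mu < tau) :
    ∃ g : RHN, g.d = f.d + (if 0 < f.h0 then 1 else 0) ∧
      ((0 < g.h0) ↔ ¬ (0 < f.h0)) ∧
      (∀ x, g.fdown x = tau * f.fdown x - f.fup x) ∧
      (∀ x, g.fup x = (x - mu) * f.fdown x + rho * (tau * f.fdown x - f.fup x)) := by
  classical
  set d := f.d with hdd
  set n := f.d + (if 0 < f.h0 then 1 else 0) with hn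
  have he1 : (if 0 < f.h0 then 1 else 0) ≤ 1 := by split <;> omega
  have hdn : d ≤ n := by omega
  have hnd1 : n ≤ d + 1 := by omega
  choose z hz1 hz2 hz3 hz4 using fun k : Fin n => aux_exists_roots f mu tau hmu htau hn k
  have hzmono : StrictMono z := by
    intro a b hab
    have hab' : (a:ℕ) < (b:ℕ) := hab
    have had : (a:ℕ) < d := by have := b.isLt; omega
    exact (hz2 a had).trans (hz3 b ⟨(a:ℕ), had⟩ hab')
  have hzinj : Function.Injective z := hzmono.injective
  set c : ℝ := if 0 < f.h0 then (1:ℝ) else tau - f.h with hc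
  have hcpos : 0 < c := by
    rw [hc]
    split
    · exact one_pos
    · next hh =>
      have h00 : f.h0 = 0 := le_antisymm (not_lt.1 hh) f.h0_nonneg
      have hs : 0 ≤ ∑ j, f.delta j / (f.pole j - mu) :=
        Finset.sum_nonneg fun j _ => (div_pos (f.delta_pos j) (sub_pos.2 (hmu j))).le
      have hle : f.h ≤ f.eval mu := by rw [RHN.eval, h00]; linarith
      linarith
  have hcne : c ≠ 0 := ne_of_gt hcpos
  have hpne : ∀ (k : Fin n) (j : Fin d), f.pole j - z k ≠ 0 := by
    intro k j
    by_cases hj : (j:ℕ) < (k:ℕ)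
    · exact sub_ne_zero.2 (ne_of_lt (hz3 k j hj))
    · have hkd : (k:ℕ) < d := lt_of_le_of_lt (not_lt.1 hj) j.isLt
      refine sub_ne_zero.2 (ne_of_gt ?_)
      exact (hz2 k hkd).trans_le
        (f.pole_strictMono.monotone (Fin.le_def.mpr (not_lt.1 hj)))
  have hkd_le : ∀ k : Fin n, (k:ℕ) ≤ d := fun k => by have := k.isLt; omega
  have hfiltp : ∀ k : Fin n,
      ((Finset.univ : Finset (Fin d)).filter fun j => f.pole j < z k).card = (k:ℕ) := by
    intro k
    have heq : ((Finset.univ : Finset (Fin d)).filter fun j => f.pole j < z k)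
        = ((Finset.univ : Finset (Fin d)).filter fun j : Fin d => (j:ℕ) < (k:ℕ)) := by
      ext j
      simp only [Finset.mem_filter, Finset.mem_univ, true_and]
      constructor
      · intro hlt
        by_contra hge
        have hkd : (k:ℕ) < d := lt_of_le_of_lt (not_lt.1 hge) j.isLt
        exact absurd hlt (not_lt.2 ((hz2 k hkd).trans_le
          (f.pole_strictMono.monotone (Fin.le_def.mpr (not_lt.1 hge)))).le)
      · exact hz3 k j
    rw [heq, aux_card_filter _ (hkd_le k)]
  have hsignA : ∀ k : Fin n, 0 < (-1:ℝ)^(k:ℕ) * ∏ j, (f.pole j - z k) := fun k =>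
    aux_signed_prod_pos f.pole (z k) Finset.univ (k:ℕ) (hfiltp k)
      (fun j _ => sub_ne_zero.1 (hpne k j))
  have hfiltz : ∀ k : Fin n, ((Finset.univ.erase k).filter fun j => z j < z k).card = (k:ℕ) := by
    intro k
    have heq : ((Finset.univ.erase k).filter fun j => z j < z k)
        = ((Finset.univ : Finset (Fin n)).filter fun j : Fin n => (j:ℕ) < (k:ℕ)) := by
      ext j
      simp only [Finset.mem_filter, Finset.mem_erase, Finset.mem_univ, true_and, and_true]
      constructor
      · rintro ⟨hne, hlt⟩
        exact hzmono.lt_iff_lt.mp hlt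
      · intro hlt
        have hjk : j < k := hlt
        exact ⟨ne_of_lt hjk, hzmono hjk⟩
    rw [heq, aux_card_filter _ (le_of_lt k.isLt)]
  have hsignB : ∀ k : Fin n, 0 < (-1:ℝ)^(k:ℕ) * ∏ j ∈ Finset.univ.erase k, (z j - z k) :=
    fun k => aux_signed_prod_pos z (z k) _ (k:ℕ) (hfiltz k)
      (fun j hj hEq => (Finset.mem_erase.mp hj).1 (hzinj hEq))
  have hBne : ∀ k : Fin n, (∏ j ∈ Finset.univ.erase k, (z j - z k)) ≠ 0 := by
    intro k hB
    have hs := hsignB k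
    rw [hB, mul_zero] at hs
    exact lt_irrefl 0 hs
  have hABpos : ∀ k : Fin n,
      0 < (∏ j, (f.pole j - z k)) * ∏ j ∈ Finset.univ.erase k, (z j - z k) := by
    intro k
    have e0 : ((-1:ℝ))^(k:ℕ) * ((-1:ℝ))^(k:ℕ) = 1 := by
      rw [← pow_add]
      exact Even.neg_one_pow ⟨(k:ℕ), rfl⟩
    have e1 : (∏ j, (f.pole j - z k)) * ∏ j ∈ Finset.univ.erase k, (z j - z k)
        = ((-1:ℝ)^(k:ℕ) * ∏ j, (f.pole j - z k))
          * ((-1:ℝ)^(k:ℕ) * ∏ j ∈ Finset.univ.erase k, (z j - z k)) := by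
      calc (∏ j, (f.pole j - z k)) * ∏ j ∈ Finset.univ.erase k, (z j - z k)
          = ((-1:ℝ)^(k:ℕ) * (-1:ℝ)^(k:ℕ))
            * ((∏ j, (f.pole j - z k)) * ∏ j ∈ Finset.univ.erase k, (z j - z k)) := by
            rw [e0, one_mul]
        _ = _ := by ring
    rw [e1]
    exact mul_pos (hsignA k) (hsignB k)
  -- the coefficients of g
  set gdelta : Fin n → ℝ := fun k =>
    ((z k - mu) * f.fdown (z k)) / (c * ∏ j ∈ Finset.univ.erase k, (z j - z k)) with hgdelta
  have hgdelta_pos : ∀ k, 0 < gdelta k := by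
    intro k
    have hB2 : 0 < (∏ j ∈ Finset.univ.erase k, (z j - z k)) * ∏ j ∈ Finset.univ.erase k, (z j - z k) :=
      mul_self_pos.mpr (hBne k)
    have hq : (∏ j, (f.pole j - z k)) / (∏ j ∈ Finset.univ.erase k, (z j - z k))
        = ((∏ j, (f.pole j - z k)) * ∏ j ∈ Finset.univ.erase k, (z j - z k))
          / ((∏ j ∈ Finset.univ.erase k, (z j - z k)) * ∏ j ∈ Finset.univ.erase k, (z j - z k)) := by
      rw [div_eq_div_iff (hBne k) (ne_of_gt hB2)]
      ring
    have hADivB : 0 < (∏ j, (f.pole j - z k)) / (∏ j ∈ Finset.univ.erase k, (z j - z k)) := by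
      rw [hq]
      exact div_pos (hABpos k) hB2
    have hrw : gdelta k = ((z k - mu) * f.h0' / c)
        * ((∏ j, (f.pole j - z k)) / (∏ j ∈ Finset.univ.erase k, (z j - z k))) := by
      simp only [hgdelta]
      rw [RHN.fdown, div_mul_div_comm, mul_assoc]
    rw [hrw]
    exact mul_pos (div_pos (mul_pos (sub_pos.2 (hz1 k)) (aux_h0'_pos f)) hcpos) hADivB
  set gh0 : ℝ := if 0 < f.h0 then 0 else 1/(tau - f.h) with hgh0
  have hgh0_nonneg : 0 ≤ gh0 := by
    rw [hgh0]
    split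
    · exact le_refl 0
    · next hh =>
      have hth : 0 < tau - f.h := by have := hcpos; rwa [hc, if_neg hh] at this
      exact (one_div_pos.2 hth).le
  set Dm : ℝ := ∏ j, (z j - mu) with hDm
  have hDmpos : 0 < Dm := Finset.prod_pos fun j _ => sub_pos.2 (hz1 j)
  have hDmne : Dm ≠ 0 := ne_of_gt hDmpos
  set Sm : ℝ := ∑ k, gdelta k * ∏ j ∈ Finset.univ.erase k, (z j - mu) with hSm
  set Tval : ℝ := rho * (tau * f.fdown mu - f.fup mu) with hTval
  set ghh : ℝ := (Tval - c * (gh0 * mu) * Dm - c * Sm) / (c * Dm) with hghh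
  have h0c : (if 0 < gh0 then 1/gh0 else 1) = c := by
    by_cases hh : 0 < f.h0
    · rw [hgh0, if_pos hh, if_neg (lt_irrefl (0:ℝ)), hc, if_pos hh]
    · have hth : 0 < tau - f.h := by have := hcpos; rwa [hc, if_neg hh] at this
      rw [hgh0, if_neg hh, if_pos (one_div_pos.2 hth), one_div_one_div, hc, if_neg hh]
  -- polynomials
  set Qp : Polynomial ℝ := ∏ j, (Polynomial.X - Polynomial.C (f.pole j)) with hQp
  set Qz : Polynomial ℝ := ∏ k : Fin n, (Polynomial.X - Polynomial.C (z k)) with hQz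
  set Sp : Polynomial ℝ := ∑ k, Polynomial.C (f.delta k)
      * ∏ j ∈ Finset.univ.erase k, (Polynomial.X - Polynomial.C (f.pole j)) with hSp
  set Sz : Polynomial ℝ := ∑ k : Fin n, Polynomial.C (gdelta k)
      * ∏ j ∈ Finset.univ.erase k, (Polynomial.X - Polynomial.C (z j)) with hSz
  set Pp : Polynomial ℝ := Polynomial.C ((-1:ℝ)^d * f.h0' * (tau - f.h)) * Qp
      - Polynomial.C ((-1:ℝ)^d * f.h0' * f.h0) * (Polynomial.X * Qp)
      - Polynomial.C ((-1:ℝ)^(d-1) * f.h0') * Sp with hPp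
  have hcard_univ_p : (Finset.univ : Finset (Fin d)).card = d := by simp
  have hcard_univ_z : (Finset.univ : Finset (Fin n)).card = n := by simp
  have hcde : ∀ k : Fin d, (Finset.univ.erase k).card = d - 1 := fun k => by
    rw [Finset.card_erase_of_mem (Finset.mem_univ k)]
    simp
  have hcze : ∀ k : Fin n, (Finset.univ.erase k).card = n - 1 := fun k => by
    rw [Finset.card_erase_of_mem (Finset.mem_univ k)]
    simp
  have hQpe : ∀ x, Qp.eval x = ∏ j, (x - f.pole j) := fun x => by rw [hQp, aux_evalprod]
  have hQze : ∀ x, Qz.eval x = ∏ k, (x - z k) := fun x => by rw [hQz, aux_evalprod]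
  have hSpe : ∀ x, Sp.eval x = ∑ k, f.delta k * ∏ j ∈ Finset.univ.erase k, (x - f.pole j) := by
    intro x
    rw [hSp, Polynomial.eval_finset_sum]
    exact Finset.sum_congr rfl fun k _ => by
      rw [Polynomial.eval_mul, Polynomial.eval_C, aux_evalprod]
  have hSze : ∀ x, Sz.eval x = ∑ k, gdelta k * ∏ j ∈ Finset.univ.erase k, (x - z j) := by
    intro x
    rw [hSz, Polynomial.eval_finset_sum]
    exact Finset.sum_congr rfl fun k _ => by
      rw [Polynomial.eval_mul, Polynomial.eval_C, aux_evalprod]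
  have hflipP : ∀ x, ∏ j, (f.pole j - x) = (-1:ℝ)^d * ∏ j, (x - f.pole j) := fun x => by
    rw [aux_flip Finset.univ f.pole x, hcard_univ_p]
  have hflipZ : ∀ x, ∏ k, (z k - x) = (-1:ℝ)^n * ∏ k, (x - z k) := fun x => by
    rw [aux_flip Finset.univ z x, hcard_univ_z]
  have hPpe : ∀ x, Pp.eval x = tau * f.fdown x - f.fup x := by
    intro x
    have hsame : ∑ k, f.delta k * ∏ j ∈ Finset.univ.erase k, (f.pole j - x)
        = (-1:ℝ)^(d-1) * ∑ k, f.delta k * ∏ j ∈ Finset.univ.erase k, (x - f.pole j) := by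
      rw [Finset.mul_sum]
      refine Finset.sum_congr rfl fun k _ => ?_
      rw [aux_flip (Finset.univ.erase k) f.pole x, hcde k]
      ring
    rw [hPp]
    simp only [Polynomial.eval_sub, Polynomial.eval_mul, Polynomial.eval_C, Polynomial.eval_X]
    rw [hQpe, hSpe, RHN.fdown, RHN.fup, hflipP x, hsame]
    ring
  have hSp0 : ∀ m : ℕ, d ≤ m → Sp.coeff m = 0 := by
    intro m hm
    rw [hSp, Polynomial.finset_sum_coeff]
    refine Finset.sum_eq_zero fun k _ => ?_
    rw [Polynomial.coeff_C_mul, Polynomial.coeff_eq_zero_of_natDegree_lt, mul_zero]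
    rw [aux_deg, hcde k]
    have hkpos := k.pos
    omega
  have hSz0 : ∀ m : ℕ, n ≤ m → Sz.coeff m = 0 := by
    intro m hm
    rw [hSz, Polynomial.finset_sum_coeff]
    refine Finset.sum_eq_zero fun k _ => ?_
    rw [Polynomial.coeff_C_mul, Polynomial.coeff_eq_zero_of_natDegree_lt, mul_zero]
    rw [aux_deg, hcze k]
    have hkpos := k.pos
    omega
  have hSpdeg : Sp.natDegree ≤ n :=
    Polynomial.natDegree_le_iff_coeff_eq_zero.mpr fun N hN => hSp0 N (by omega)
  have hQpdeg : Qp.natDegree = d := by rw [hQp, aux_deg, hcard_univ_p]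
  have hQzdeg : Qz.natDegree = n := by rw [hQz, aux_deg, hcard_univ_z]
  have hPpdeg : Pp.natDegree ≤ n := by
    rw [hPp]
    refine le_trans (Polynomial.natDegree_sub_le _ _)
      (max_le (le_trans (Polynomial.natDegree_sub_le _ _) (max_le ?_ ?_)) ?_)
    · exact le_trans (Polynomial.natDegree_C_mul_le _ _) (by rw [hQpdeg]; exact hdn)
    · by_cases hh : 0 < f.h0
      · have hne : n = d + 1 := by rw [hn, if_pos hh]
        refine le_trans (Polynomial.natDegree_C_mul_le _ _) ?_
        refine le_trans Polynomial.natDegree_mul_le ?_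
        rw [Polynomial.natDegree_X, hQpdeg]
        omega
      · have h00 : f.h0 = 0 := le_antisymm (not_lt.1 hh) f.h0_nonneg
        rw [h00, mul_zero, Polynomial.C_0, zero_mul]
        simp
    · exact le_trans (Polynomial.natDegree_C_mul_le _ _) hSpdeg
  have hQptop : Qp.coeff d = 1 := by
    rw [hQp]
    have hco := aux_coeff_top Finset.univ f.pole
    rwa [hcard_univ_p] at hco
  have hQztop : Qz.coeff n = 1 := by
    rw [hQz]
    have hco := aux_coeff_top Finset.univ z
    rwa [hcard_univ_z] at hco
  have hPpcoeff : Pp.coeff n = (-1:ℝ)^n * c := by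
    rw [hPp]
    simp only [Polynomial.coeff_sub, Polynomial.coeff_C_mul]
    rw [hSp0 n hdn, mul_zero, sub_zero]
    by_cases hh : 0 < f.h0
    · have hne : n = d + 1 := by rw [hn, if_pos hh]
      rw [hne, Polynomial.coeff_X_mul, hQptop, hQp,
        aux_coeff_gt Finset.univ f.pole (by rw [hcard_univ_p]; omega), hc, if_pos hh,
        RHN.h0', if_pos hh]
      field_simp [ne_of_gt hh]
      ring
    · have hne : n = d := by rw [hn, if_neg hh]; omega
      have h00 : f.h0 = 0 := le_antisymm (not_lt.1 hh) f.h0_nonneg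
      rw [hne, hQptop]
      simp only [RHN.h0', hc, if_neg hh, h00, mul_zero, zero_mul, sub_zero, mul_one]
      norm_num
  have hPpzk : ∀ k : Fin n, Pp.eval (z k) = 0 := by
    intro k
    rw [hPpe (z k), aux_fup_eq f (z k) (hpne k), hz4 k]
    ring
  have hE : Pp = Polynomial.C ((-1:ℝ)^n * c) * Qz := by
    refine sub_eq_zero.mp (aux_poly_zero _ n z hzinj ?_ ?_ ?_)
    · exact le_trans (Polynomial.natDegree_sub_le _ _)
        (max_le hPpdeg (le_trans (Polynomial.natDegree_C_mul_le _ _) (le_of_eq hQzdeg)))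
    · rw [Polynomial.coeff_sub, hPpcoeff, Polynomial.coeff_C_mul, hQztop, mul_one, sub_self]
    · intro k
      rw [Polynomial.eval_sub, hPpzk k, Polynomial.eval_mul, Polynomial.eval_C, hQze,
        Finset.prod_eq_zero (Finset.mem_univ k) (sub_self (z k))]
      simp
  have hfdown_fact : ∀ x, tau * f.fdown x - f.fup x = c * ∏ j, (z j - x) := by
    intro x
    rw [← hPpe x, hE, Polynomial.eval_mul, Polynomial.eval_C, hQze, hflipZ x]
    ring
  -- the fup polynomial identity
  set Fd : Polynomial ℝ := Polynomial.C ((-1:ℝ)^d * f.h0') * Qp with hFd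
  set Tt : Polynomial ℝ := (Polynomial.X - Polynomial.C mu) * Fd + Polynomial.C rho * Pp with hTt
  set Gg : Polynomial ℝ := Polynomial.C ((-1:ℝ)^n * c * gh0) * (Polynomial.X * Qz)
      + Polynomial.C ((-1:ℝ)^n * c * ghh) * Qz
      + Polynomial.C ((-1:ℝ)^(n-1) * c) * Sz with hGg
  have hFde : ∀ x, Fd.eval x = f.fdown x := by
    intro x
    rw [hFd, Polynomial.eval_mul, Polynomial.eval_C, hQpe, RHN.fdown, hflipP x]
    ring
  have hTte : ∀ x, Tt.eval x = (x - mu) * f.fdown x + rho * (tau * f.fdown x - f.fup x) := by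
    intro x
    rw [hTt]
    simp only [Polynomial.eval_add, Polynomial.eval_mul, Polynomial.eval_sub,
      Polynomial.eval_C, Polynomial.eval_X]
    rw [hFde, hPpe]
  have hGge : ∀ x, Gg.eval x = c * ((gh0 * x + ghh) * ∏ j, (z j - x)
      + ∑ k, gdelta k * ∏ j ∈ Finset.univ.erase k, (z j - x)) := by
    intro x
    have hsame : ∑ k, gdelta k * ∏ j ∈ Finset.univ.erase k, (z j - x)
        = (-1:ℝ)^(n-1) * ∑ k, gdelta k * ∏ j ∈ Finset.univ.erase k, (x - z j) := by
      rw [Finset.mul_sum]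
      refine Finset.sum_congr rfl fun k _ => ?_
      rw [aux_flip (Finset.univ.erase k) z x, hcze k]
      ring
    rw [hGg]
    simp only [Polynomial.eval_add, Polynomial.eval_mul, Polynomial.eval_C, Polynomial.eval_X]
    rw [hQze, hSze, hflipZ x, hsame]
    ring
  have hFddeg : Fd.natDegree ≤ d := by
    rw [hFd]
    exact le_trans (Polynomial.natDegree_C_mul_le _ _) (le_of_eq hQpdeg)
  have hTtdeg : Tt.natDegree ≤ n + 1 := by
    rw [hTt]
    refine le_trans (Polynomial.natDegree_add_le _ _) (max_le ?_ ?_)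
    · refine le_trans Polynomial.natDegree_mul_le ?_
      have h1 : (Polynomial.X - Polynomial.C mu).natDegree ≤ 1 :=
        le_of_eq (Polynomial.natDegree_X_sub_C mu)
      have := add_le_add h1 hFddeg
      omega
    · exact le_trans (Polynomial.natDegree_C_mul_le _ _) (le_trans hPpdeg (by omega))
  have hSzdeg : Sz.natDegree ≤ n :=
    Polynomial.natDegree_le_iff_coeff_eq_zero.mpr fun N hN => hSz0 N (by omega)
  have hGgdeg : Gg.natDegree ≤ n + 1 := by
    rw [hGg]
    refine le_trans (Polynomial.natDegree_add_le _ _) (max_le (le_trans (Polynomial.natDegree_add_le _ _) (max_le ?_ ?_)) ?_)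
    · refine le_trans (Polynomial.natDegree_C_mul_le _ _) ?_
      refine le_trans Polynomial.natDegree_mul_le ?_
      rw [Polynomial.natDegree_X, hQzdeg]
      omega
    · exact le_trans (Polynomial.natDegree_C_mul_le _ _) (by omega)
    · exact le_trans (Polynomial.natDegree_C_mul_le _ _) (le_trans hSzdeg (by omega))
  have hQpc1 : Qp.coeff (n+1) = 0 := by
    rw [hQp]
    exact aux_coeff_gt Finset.univ f.pole (by rw [hcard_univ_p]; omega)
  have hQzc1 : Qz.coeff (n+1) = 0 := by
    rw [hQz]
    exact aux_coeff_gt Finset.univ z (by rw [hcard_univ_z]; omega)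
  have hTtc : Tt.coeff (n+1) = (-1:ℝ)^d * f.h0' * Qp.coeff n := by
    rw [hTt, hFd, sub_mul]
    rw [Polynomial.coeff_add, Polynomial.coeff_sub, Polynomial.coeff_X_mul]
    simp only [Polynomial.coeff_C_mul]
    rw [hQpc1, Polynomial.coeff_eq_zero_of_natDegree_lt (lt_of_le_of_lt hPpdeg (Nat.lt_succ_self n))]
    ring
  have hGgc : Gg.coeff (n+1) = (-1:ℝ)^n * c * gh0 := by
    rw [hGg]
    simp only [Polynomial.coeff_add, Polynomial.coeff_C_mul, Polynomial.coeff_X_mul]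
    rw [hQztop, hQzc1, hSz0 (n+1) (by omega)]
    ring
  have hcoeq : Gg.coeff (n+1) = Tt.coeff (n+1) := by
    rw [hGgc, hTtc]
    by_cases hh : 0 < f.h0
    · have hdltn : d < n := by rw [hn, if_pos hh]; omega
      rw [hgh0, if_pos hh, hQp, aux_coeff_gt Finset.univ f.pole (by rw [hcard_univ_p]; omega)]
      ring
    · have hne : n = d := by rw [hn, if_neg hh]; omega
      have hth : 0 < tau - f.h := by have := hcpos; rwa [hc, if_neg hh] at this
      rw [hne, hQptop, RHN.h0', if_neg hh, hc, if_neg hh, hgh0, if_neg hh]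
      field_simp
  have hevq : ∀ k : Fin n, Gg.eval (z k) = Tt.eval (z k) := by
    intro k
    rw [hGge, hTte]
    rw [Finset.prod_eq_zero (Finset.mem_univ k) (sub_self (z k))]
    have hsum1 : ∑ m, gdelta m * ∏ j ∈ Finset.univ.erase m, (z j - z k)
        = gdelta k * ∏ j ∈ Finset.univ.erase k, (z j - z k) := by
      refine Finset.sum_eq_single k (fun m _ hm => ?_) (fun hk => absurd (Finset.mem_univ k) hk)
      rw [Finset.prod_eq_zero (Finset.mem_erase.mpr ⟨Ne.symm hm, Finset.mem_univ k⟩)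
        (sub_self (z k)), mul_zero]
    rw [hsum1]
    have h2 := hPpzk k
    rw [hPpe] at h2
    rw [h2]
    simp only [mul_zero, zero_add, add_zero]
    have hBk := hBne k
    simp only [hgdelta]
    field_simp
  have hevmu : Gg.eval mu = Tt.eval mu := by
    rw [hGge, hTte]
    have hT : (mu - mu) * f.fdown mu + rho * (tau * f.fdown mu - f.fup mu) = Tval := by
      rw [hTval]
      ring
    rw [hT, ← hDm, ← hSm, hghh]
    field_simp [hcne, hDmne]
    ring
  have hE2 : Gg = Tt := by
    refine sub_eq_zero.mp (aux_poly_zero _ (n+1) (Fin.cons mu z)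
      (Fin.cons_injective_of_injective ?_ hzinj) ?_ ?_ ?_)
    · rintro ⟨i, hi⟩
      exact absurd hi (ne_of_gt (hz1 i))
    · exact le_trans (Polynomial.natDegree_sub_le _ _) (max_le hGgdeg hTtdeg)
    · rw [Polynomial.coeff_sub, hcoeq, sub_self]
    · intro k
      refine Fin.cases ?_ ?_ k
      · rw [Fin.cons_zero, Polynomial.eval_sub, hevmu, sub_self]
      · intro i
        rw [Fin.cons_succ, Polynomial.eval_sub, hevq i, sub_self]
  have hfup_fact : ∀ x, c * ((gh0 * x + ghh) * ∏ j, (z j - x)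
      + ∑ k, gdelta k * ∏ j ∈ Finset.univ.erase k, (z j - x))
      = (x - mu) * f.fdown x + rho * (tau * f.fdown x - f.fup x) := by
    intro x
    rw [← hGge x, hE2, hTte]
  -- assemble the structure
  refine ⟨⟨n, gh0, ghh, gdelta, z, hgh0_nonneg, hgdelta_pos, hzmono⟩, hn, ?_, ?_, ?_⟩
  · by_cases hh : 0 < f.h0
    · have : gh0 = 0 := by rw [hgh0, if_pos hh]
      show (0 < gh0) ↔ ¬ (0 < f.h0)
      rw [this]
      exact iff_of_false (lt_irrefl 0) (not_not_intro hh)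
    · have hth : 0 < tau - f.h := by have := hcpos; rwa [hc, if_neg hh] at this
      show (0 < gh0) ↔ ¬ (0 < f.h0)
      rw [hgh0, if_neg hh]
      exact iff_of_true (one_div_pos.2 hth) hh
  · intro x
    show (if 0 < gh0 then 1/gh0 else 1) * ∏ j, (z j - x) = tau * f.fdown x - f.fup x
    rw [h0c]
    exact (hfdown_fact x).symm
  · intro x
    show (if 0 < gh0 then 1/gh0 else 1) * ((gh0 * x + ghh) * ∏ j, (z j - x)
      + ∑ k, gdelta k * ∏ j ∈ Finset.univ.erase k, (z j - x))
      = (x - mu) * f.fdown x + rho * (tau * f.fdown x - f.fup x)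
    rw [h0c]
    exact hfup_fact x

end ThetaConstr

/-- If `μ < π̊(f)` and `τ > f(μ)` (when `f ≠ ∞`; for `f = ∞` there is no condition), then
`f̂ = Θ(μ,τ,ρ,f)` is a rational Herglotz–Nevanlinna function, `ind f̂ = ind f + 1`, and
`f̂↑(λ) = −ρ f↑(λ) + (λ−μ+τρ) f↓(λ)`, `f̂↓(λ) = −f↑(λ) + τ f↓(λ)`. -/
theorem theta_increases_index
    (f : BC) (mu tau rho : ℝ)
    (hmu : (mu : EReal) < BC.mpole f)
    (htau : ∀ f' : RHN, f = some f' → f'.eval mu < tau) :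
    ∃ g : RHN, IsTheta mu tau rho f (some g) ∧
      g.index = BC.index f + 1 ∧
      (∀ x : ℝ, g.fup x = -rho * BC.fup f x + (x - mu + tau * rho) * BC.fdown f x) ∧
      (∀ x : ℝ, g.fdown x = -(BC.fup f x) + tau * BC.fdown f x) := by
  match f with
  | none =>
    refine ⟨⟨0, 0, rho, fun k => k.elim0, fun k => k.elim0, le_refl 0,
      fun k => k.elim0, fun a => a.elim0⟩, ⟨rfl, rfl, rfl⟩, ?_, ?_, ?_⟩
    · show (2 * ((0:ℕ):ℤ) + if (0:ℝ) < 0 then 1 else 0) = -1 + 1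
      norm_num
    · intro x
      show RHN.fup _ x = -rho * (-1) + (x - mu + tau * rho) * 0
      rw [RHN.fup, RHN.h0']
      simp
    · intro x
      show RHN.fdown _ x = -(-1) + tau * 0
      rw [RHN.fdown, RHN.h0']
      simp
  | some f =>
    have hmu' : ∀ j, mu < f.pole j := by
      intro j
      have hd : 0 < f.d := j.pos
      have hm : (mu : EReal) < f.mpole := hmu
      rw [RHN.mpole, dif_pos hd] at hm
      have hm' : mu < f.pole ⟨0, hd⟩ := by exact_mod_cast hm
      exact lt_of_lt_of_le hm' (f.pole_strictMono.monotone (Fin.le_def.mpr (Nat.zero_le _)))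
    have htau' : f.eval mu < tau := htau f rfl
    obtain ⟨g, hgd, hgiff, hgdown, hgup⟩ := aux_theta_construction f mu tau rho hmu' htau'
    refine ⟨g, ⟨?_, ?_⟩, ?_, ?_, ?_⟩
    · intro hall
      exact absurd (hall mu) (ne_of_lt htau')
    · intro x hfd hfe hgdx
      have hfd' : f.fdown x ≠ 0 := hfd
      have hgd' : g.fdown x ≠ 0 := hgdx
      have hffac := aux_fdown_factors f hfd'
      have hgfac := aux_fdown_factors g hgd'
      have hgfup := aux_fup_eq g x hgfac
      have hffup := aux_fup_eq f x hffac
      have h1 : g.eval x * g.fdown x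
          = (x - mu) * f.fdown x + rho * (tau * f.fdown x - f.fup x) := by
        rw [← hgfup, hgup]
      have h2 : g.fdown x = tau * f.fdown x - f.fup x := hgdown x
      show g.eval x = (mu - x) / (f.eval x - tau) + rho
      have hfe' : f.eval x - tau ≠ 0 := sub_ne_zero.2 hfe
      rw [h2, hffup] at h1
      have h3 : (g.eval x * (f.eval x - tau)) * f.fdown x
          = ((mu - x) + rho * (f.eval x - tau)) * f.fdown x := by
        linear_combination -h1
      have h4 := mul_right_cancel₀ hfd' h3
      have h5 : (g.eval x - rho) * (f.eval x - tau) = mu - x := by linear_combination h4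
      rw [← h5, mul_div_cancel_right₀ _ hfe']
      ring
    · show g.index = f.index + 1
      rw [RHN.index, RHN.index]
      by_cases hh : 0 < f.h0
      · have hng : ¬ 0 < g.h0 := fun hx => (hgiff.mp hx) hh
        rw [if_neg hng, if_pos hh, hgd, if_pos hh]
        push_cast
        ring
      · have hpg : 0 < g.h0 := hgiff.mpr hh
        rw [if_pos hpg, if_neg hh, hgd, if_neg hh]
        push_cast
        ring
    · intro x
      show g.fup x = -rho * f.fup x + (x - mu + tau * rho) * f.fdown x
      rw [hgup x]
      ring
    · intro x
      show g.fdown x = -(f.fup x) + tau * f.fdown x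
      rw [hgdown x]
      ring
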